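/- arXiv:1911.03634 — 6 statements merged into one kernel-verified Lean document; each statement's English description precedes it below -/
import Mathlib

section
/- If S_1, S_2 ⊆ P({1,...,n}) \ {∅} and for every sequence of sets A (over some fixed infinite ambient type, e.g. ℕ) we have F_{S_1}(A) = F_{S_2}(A), then S_1 = S_2. -/
open Finset

/-- `G_J(A)`: intersection of the `A j` for `j ∈ J` with the complements
(relative to the union of all the `A i`) of the `A j` for `j ∉ J`. -/
def gset {α : Type*} {n : ℕ} (A : Fin n → Set α) (J : Finset (Fin n)) : Set α :=
  (⋂ j ∈ J, A j) ∩ ⋂ j ∈ Jᶜ, ((⋃ i, A i) \ A j)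

/-- `F_S(A) = ⋃_{J ∈ S} G_J(A)`. -/
def fset {α : Type*} {n : ℕ} (A : Fin n → Set α) (S : Finset (Finset (Fin n))) : Set α :=
  ⋃ J ∈ S, gset A J

/-- `i_{n,k}(A)`: the sum over all `k`-element subsets `J` of the index set of
the cardinality of `⋂_{j ∈ J} A j`. -/
noncomputable def icard {α : Type*} {n : ℕ} (A : Fin n → Set α) (k : ℕ) : ℕ :=
  ∑ J ∈ Finset.powersetCard k (Finset.univ : Finset (Fin n)), (⋂ j ∈ J, A j).ncard

/-- `σ_{n,j}(A)`: the sum over all `j`-element subsets `I` of the index set of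
the cardinality of `G_I(A)`. -/
noncomputable def sigmacard {α : Type*} {n : ℕ} (A : Fin n → Set α) (j : ℕ) : ℕ :=
  ∑ I ∈ Finset.powersetCard j (Finset.univ : Finset (Fin n)), (gset A I).ncard

theorem stmt_9 {n : ℕ} (S₁ S₂ : Finset (Finset (Fin n)))
    (h₁ : ∅ ∉ S₁) (h₂ : ∅ ∉ S₂)
    (h : ∀ A : Fin n → Set ℕ, fset A S₁ = fset A S₂) :
    S₁ = S₂ := by
  ext J
  by_cases hJ : J = ∅
  · subst hJ; simp [h₁, h₂]
  · have hJne : J.Nonempty := Finset.nonempty_iff_ne_empty.2 hJ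
    set A : Fin n → Set ℕ := fun j => if j ∈ J then ({0} : Set ℕ) else ∅ with hA
    have hu : (0:ℕ) ∈ ⋃ i, A i := by
      obtain ⟨j₀, hj₀⟩ := hJne
      exact Set.mem_iUnion.2 ⟨j₀, by simp [hA, hj₀]⟩
    have key : ∀ I : Finset (Fin n), ((0:ℕ) ∈ gset A I ↔ I = J) := by
      intro I
      constructor
      · rintro ⟨h1, h2⟩
        simp only [Set.mem_iInter] at h1 h2
        ext j
        constructor
        · intro hjI
          by_contra hjJ
          have := h1 j hjI
          simp [hA, hjJ] at this
        · intro hjJ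
          by_contra hjI
          have h3 := (h2 j (Finset.mem_compl.2 hjI)).2
          simp [hA, hjJ] at h3
      · rintro rfl
        constructor
        · simp only [Set.mem_iInter]
          intro j hj
          simp [hA, hj]
        · simp only [Set.mem_iInter]
          intro j hj
          exact ⟨hu, by simp [hA, Finset.mem_compl.1 hj]⟩
    have h0 : ∀ S : Finset (Finset (Fin n)), ((0:ℕ) ∈ fset A S ↔ J ∈ S) := by
      intro S
      simp only [fset, Set.mem_iUnion]
      constructor
      · rintro ⟨I, hIS, hI⟩
        rw [key I] at hI; subst hI; exact hIS
      · intro hJS; exact ⟨J, hJS, (key J).2 rfl⟩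
    rw [← h0 S₁, ← h0 S₂, h A]
end

section
/- Suppose S ⊆ P({1,...,n}) \ {∅} and there exist constants c_1,...,c_n (rationals or integers) such that for every sequence A of finite sets, |F_S(A)| = Σ_{k=1}^n c_k · i_{n,k}(A). Then for each 1 ≤ k ≤ n, if S contains some set of cardinality k, it contains every subset of {1,...,n} of cardinality k. -/
open Finset

/-- Indicator family: `A i = {0}` if `i ∈ T`, else `∅`. -/
def AT {n : ℕ} (T : Finset (Fin n)) : Fin n → Set ℕ := fun i => if i ∈ T then {0} else ∅

lemma AT_finite {n : ℕ} (T : Finset (Fin n)) : ∀ i, (AT T i).Finite := by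
  intro i
  unfold AT
  split_ifs <;> simp

lemma iUnion_AT {n : ℕ} (T : Finset (Fin n)) (hT : T.Nonempty) :
    (⋃ i, AT T i) = {0} := by
  obtain ⟨t, ht⟩ := hT
  ext x
  simp only [Set.mem_iUnion, AT, Set.mem_singleton_iff]
  constructor
  · rintro ⟨i, hi⟩
    split_ifs at hi <;> simp_all
  · rintro rfl
    exact ⟨t, by simp [ht]⟩

lemma mem_AT {n : ℕ} (T : Finset (Fin n)) (i : Fin n) (x : ℕ) :
    x ∈ AT T i ↔ i ∈ T ∧ x = 0 := by
  unfold AT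
  split_ifs with h <;> simp_all

lemma gset_AT {n : ℕ} (T : Finset (Fin n)) (hT : T.Nonempty) (J : Finset (Fin n)) :
    gset (AT T) J = if J = T then {0} else ∅ := by
  obtain ⟨t, ht⟩ := hT
  have hU : (⋃ i, AT T i) = {0} := iUnion_AT T ⟨t, ht⟩
  have key : ∀ x : ℕ, x ∈ gset (AT T) J ↔ x = 0 ∧ J = T := by
    intro x
    unfold gset
    rw [hU]
    simp only [Set.mem_inter_iff, Set.mem_iInter, Set.mem_diff, mem_AT,
      Set.mem_singleton_iff, Finset.mem_compl]
    constructor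
    · rintro ⟨h1, h2⟩
      have hx : x = 0 := by
        by_cases hJ : J.Nonempty
        · obtain ⟨j, hj⟩ := hJ
          exact (h1 j hj).2
        · have htJ : t ∉ J := by
            simp [Finset.not_nonempty_iff_eq_empty.mp hJ]
          exact (h2 t htJ).1
      refine ⟨hx, ?_⟩
      ext j
      constructor
      · intro hj
        exact (h1 j hj).1
      · intro hj
        by_contra hjJ
        exact (h2 j hjJ).2 ⟨hj, hx⟩
    · rintro ⟨rfl, rfl⟩
      exact ⟨fun j hj => ⟨hj, rfl⟩, fun j hj => ⟨rfl, fun hc => hj hc.1⟩⟩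
  ext x
  rw [key]
  split_ifs with h <;> simp [h]

lemma fset_AT {n : ℕ} (T : Finset (Fin n)) (hT : T.Nonempty) (S : Finset (Finset (Fin n))) :
    (fset (AT T) S).ncard = if T ∈ S then 1 else 0 := by
  have : fset (AT T) S = if T ∈ S then ({0} : Set ℕ) else ∅ := by
    ext x
    simp only [fset, Set.mem_iUnion]
    constructor
    · rintro ⟨J, hJ, hx⟩
      rw [gset_AT T hT] at hx
      split_ifs at hx with h
      · subst h; simp_all
      · simp at hx
    · intro hx
      split_ifs at hx with h
      · exact ⟨T, h, by rw [gset_AT T hT]; simp_all⟩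
      · simp at hx
  rw [this]
  split_ifs <;> simp

lemma iInter_AT {n : ℕ} (T J : Finset (Fin n)) (hJ : J.Nonempty) :
    (⋂ j ∈ J, AT T j) = if J ⊆ T then {0} else ∅ := by
  split_ifs with h
  · ext x
    simp only [Set.mem_iInter, AT, Set.mem_singleton_iff]
    constructor
    · intro hx
      obtain ⟨j, hj⟩ := hJ
      have := hx j hj
      simpa [h hj] using this
    · rintro rfl j hj
      simp [h hj]
  · ext x
    simp only [Set.mem_iInter, AT, Set.mem_empty_iff_false, iff_false]
    intro hx
    obtain ⟨j, hjJ, hjT⟩ := Finset.not_subset.mp h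
    have := hx j hjJ
    simp [hjT] at this

lemma icard_AT {n : ℕ} (T : Finset (Fin n)) (k : ℕ) (hk : 1 ≤ k) :
    icard (AT T) k = Nat.choose T.card k := by
  unfold icard
  have : ∀ J ∈ Finset.powersetCard k (Finset.univ : Finset (Fin n)),
      (⋂ j ∈ J, AT T j).ncard = if J ⊆ T then 1 else 0 := by
    intro J hJ
    have hJc : J.card = k := (Finset.mem_powersetCard.mp hJ).2
    have hJne : J.Nonempty := Finset.card_pos.mp (hJc ▸ hk)
    rw [iInter_AT T J hJne]
    split_ifs <;> simp
  rw [Finset.sum_congr rfl this, ← Finset.card_filter]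
  rw [← Finset.card_powersetCard k T]
  congr 1
  ext J
  simp only [Finset.mem_filter, Finset.mem_powersetCard, Finset.subset_univ, true_and]
  tauto

theorem stmt_10 {n : ℕ} (S : Finset (Finset (Fin n))) (hS : ∅ ∉ S) (c : ℕ → ℚ)
    (hc : ∀ A : Fin n → Set ℕ, (∀ i, (A i).Finite) →
      ((fset A S).ncard : ℚ) = ∑ k ∈ Finset.Icc 1 n, c k * icard A k) :
    ∀ I ∈ S, ∀ J : Finset (Fin n), J.card = I.card → J ∈ S := by
  intro I hI J hJI
  have hIne : I.Nonempty := by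
    rcases Finset.eq_empty_or_nonempty I with rfl | h
    · exact absurd hI hS
    · exact h
  have hJne : J.Nonempty := Finset.card_pos.mp (hJI ▸ Finset.card_pos.mpr hIne)
  have h1 := hc (AT I) (AT_finite I)
  have h2 := hc (AT J) (AT_finite J)
  rw [fset_AT I hIne] at h1
  rw [fset_AT J hJne] at h2
  have hsum : ∑ k ∈ Finset.Icc 1 n, c k * icard (AT I) k
      = ∑ k ∈ Finset.Icc 1 n, c k * icard (AT J) k := by
    apply Finset.sum_congr rfl
    intro k hk
    rw [Finset.mem_Icc] at hk
    rw [icard_AT I k hk.1, icard_AT J k hk.1, hJI]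
  rw [if_pos hI] at h1
  rw [← hsum, ← h1] at h2
  by_contra hJS
  rw [if_neg hJS] at h2
  norm_num at h2
end

section
/- For any sequence of finite sets A_1,...,A_n and 1 ≤ k ≤ n, i_{n,k}(A) = Σ_{j=k}^{n} C(j,k) · σ_{n,j}(A), where σ_{n,j}(A) = Σ_{|I|=j} |G_I(A)|. -/
open Finset

lemma mem_gset {α : Type*} {n : ℕ} {A : Fin n → Set α} {I : Finset (Fin n)}
    (hI : I.Nonempty) {x : α} : x ∈ gset A I ↔ ∀ i, (x ∈ A i ↔ i ∈ I) := by
  simp only [gset, Set.mem_inter_iff, Set.mem_iInter, Set.mem_diff, Set.mem_iUnion,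
    Finset.mem_compl]
  constructor
  · rintro ⟨h1, h2⟩ i
    constructor
    · intro hx
      by_contra hi
      exact (h2 i hi).2 hx
    · exact h1 i
  · intro h
    refine ⟨fun i hi => (h i).2 hi, fun i hi => ⟨?_, fun hx => hi ((h i).1 hx)⟩⟩
    obtain ⟨j, hj⟩ := hI
    exact ⟨j, (h j).2 hj⟩

lemma gset_finite {α : Type*} {n : ℕ} {A : Fin n → Set α} (hA : ∀ i, (A i).Finite)
    {I : Finset (Fin n)} (hI : I.Nonempty) : (gset A I).Finite := by
  obtain ⟨j, hj⟩ := hI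
  apply (hA j).subset
  intro x hx
  exact ((mem_gset ⟨j, hj⟩).1 hx j).2 hj

lemma ncard_biUnion {α ι : Type*} (S : Finset ι) (f : ι → Set α)
    (hfin : ∀ i ∈ S, (f i).Finite)
    (hdisj : ∀ i ∈ S, ∀ j ∈ S, i ≠ j → Disjoint (f i) (f j)) :
    (⋃ i ∈ S, f i).ncard = ∑ i ∈ S, (f i).ncard := by
  classical
  revert hfin hdisj
  induction S using Finset.induction_on with
  | empty => intro _ _; simp
  | @insert a S ha ih =>
    intro hfin hdisj
    rw [Finset.sum_insert ha, ← ih (fun i hi => hfin i (mem_insert_of_mem hi))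
      (fun i hi j hj hij => hdisj i (mem_insert_of_mem hi) j (mem_insert_of_mem hj) hij)]
    rw [Finset.set_biUnion_insert]
    apply Set.ncard_union_eq
    · rw [Set.disjoint_iUnion_right]
      intro i
      rw [Set.disjoint_iUnion_right]
      intro hi
      exact hdisj a (mem_insert_self a S) i (mem_insert_of_mem hi) (fun h => ha (h ▸ hi))
    · exact hfin a (mem_insert_self a S)
    · exact Set.Finite.biUnion S.finite_toSet (fun i hi => hfin i (mem_insert_of_mem hi))

lemma inter_eq_union_gset {α : Type*} {n : ℕ} (A : Fin n → Set α)
    {J : Finset (Fin n)} (hJ : J.Nonempty) :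
    (⋂ j ∈ J, A j) = ⋃ I ∈ (Finset.univ : Finset (Fin n)).powerset.filter (J ⊆ ·), gset A I := by
  classical
  ext x
  simp only [Set.mem_iInter, Set.mem_iUnion, Finset.mem_filter, Finset.mem_powerset]
  constructor
  · intro hx
    refine ⟨Finset.univ.filter (fun i => x ∈ A i), ⟨Finset.filter_subset _ _, ?_⟩, ?_⟩
    · intro j hj
      simp [hx j hj]
    · obtain ⟨j, hj⟩ := hJ
      rw [mem_gset ⟨j, by simp [hx j hj]⟩]
      intro i; simp
  · rintro ⟨I, ⟨-, hJI⟩, hx⟩ j hj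
    obtain ⟨j0, hj0⟩ := hJ
    exact ((mem_gset ⟨j0, hJI hj0⟩).1 hx j).2 (hJI hj)

theorem stmt_11 {α : Type*} {n : ℕ} (A : Fin n → Set α) (hA : ∀ i, (A i).Finite)
    (k : ℕ) (hk1 : 1 ≤ k) (hk2 : k ≤ n) :
    icard A k = ∑ j ∈ Finset.Icc k n, j.choose k * sigmacard A j := by
  classical
  have key : ∀ J ∈ Finset.powersetCard k (Finset.univ : Finset (Fin n)),
      (⋂ j ∈ J, A j).ncard
        = ∑ I ∈ (Finset.univ : Finset (Fin n)).powerset.filter (J ⊆ ·), (gset A I).ncard := by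
    intro J hJ
    rw [Finset.mem_powersetCard] at hJ
    have hJne : J.Nonempty := Finset.card_pos.mp (hJ.2 ▸ hk1)
    rw [inter_eq_union_gset A hJne]
    apply ncard_biUnion
    · intro I hI
      rw [Finset.mem_filter] at hI
      exact gset_finite hA (hJne.mono hI.2)
    · intro I hI I' hI' hne
      rw [Finset.mem_filter] at hI hI'
      rw [Set.disjoint_left]
      intro x hx hx'
      apply hne
      ext i
      rw [← (mem_gset (hJne.mono hI.2)).1 hx i, ← (mem_gset (hJne.mono hI'.2)).1 hx' i]
  rw [icard, Finset.sum_congr rfl key]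
  simp_rw [Finset.sum_filter]
  rw [Finset.sum_comm]
  have step : ∀ I ∈ (Finset.univ : Finset (Fin n)).powerset,
      (∑ J ∈ Finset.powersetCard k (Finset.univ : Finset (Fin n)),
        if J ⊆ I then (gset A I).ncard else 0) = I.card.choose k * (gset A I).ncard := by
    intro I hI
    rw [← Finset.sum_filter, Finset.sum_const, smul_eq_mul]
    congr 1
    have h2 : (Finset.powersetCard k (Finset.univ : Finset (Fin n))).filter (· ⊆ I)
        = Finset.powersetCard k I := by
      ext J
      simp only [Finset.mem_filter, Finset.mem_powersetCard, Finset.subset_univ, true_and]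
      tauto
    rw [h2, Finset.card_powersetCard]
  rw [Finset.sum_congr rfl step, Finset.powerset_card_disjiUnion]
  erw [Finset.sum_disjiUnion]
  have h3 : ∀ j ∈ Finset.range ((Finset.univ : Finset (Fin n)).card + 1),
      (∑ I ∈ Finset.powersetCard j (Finset.univ : Finset (Fin n)),
        I.card.choose k * (gset A I).ncard) = j.choose k * sigmacard A j := by
    intro j hj
    rw [sigmacard, Finset.mul_sum]
    apply Finset.sum_congr rfl
    intro I hI
    rw [(Finset.mem_powersetCard.1 hI).2]
  rw [Finset.sum_congr rfl h3]
  symm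
  apply Finset.sum_subset
  · intro j hj
    rw [Finset.mem_Icc] at hj
    simp [Finset.mem_range, Nat.lt_succ_of_le hj.2]
  · intro j hj hj2
    rw [Finset.mem_range, Finset.card_univ, Fintype.card_fin] at hj
    rw [Finset.mem_Icc, not_and_or, not_le, not_le] at hj2
    rcases hj2 with h | h
    · rw [Nat.choose_eq_zero_of_lt h, zero_mul]
    · omega
end

section
/- Generalized inclusion-exclusion: for any finite sets A_1,...,A_n and 1 ≤ m ≤ n, the number of elements x belonging to at least m of the sets A_1,...,A_n equals Σ_{k=m}^{n} (-1)^{k-m} C(k-1, k-m) i_{n,k}(A). -/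
open Finset

lemma lemA (r d : ℕ) (hrd : r ≤ d) :
    ∑ j ∈ Finset.Icc r d, (-1:ℤ)^(j-r) * (j.choose r) * (d.choose j)
      = if d = r then 1 else 0 := by
  have h1 : Finset.Icc r d
      = (Finset.range (d - r + 1)).map ⟨fun i => r + i, add_right_injective r⟩ := by
    ext j
    simp only [Finset.mem_Icc, Finset.mem_map, Finset.mem_range, Function.Embedding.coeFn_mk]
    constructor
    · intro h; exact ⟨j - r, by omega, by omega⟩
    · rintro ⟨i, hi, rfl⟩; omega
  rw [h1, Finset.sum_map]
  simp only [Function.Embedding.coeFn_mk]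
  have hterm : ∀ i ∈ Finset.range (d - r + 1),
      (-1:ℤ)^((r+i)-r) * ((r+i).choose r) * (d.choose (r+i))
        = (d.choose r : ℤ) * ((-1:ℤ)^i * ((d-r).choose i)) := by
    intro i hi
    simp only [Finset.mem_range] at hi
    have hle : r + i ≤ d := by omega
    have h2 := Nat.choose_mul (n := d) (Nat.le_add_right r i)
    rw [Nat.add_sub_cancel_left] at h2
    have h2' : (d.choose (r+i) : ℤ) * ((r+i).choose r) = (d.choose r : ℤ) * ((d-r).choose i) := by
      exact_mod_cast congrArg (Nat.cast : ℕ → ℤ) h2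
    rw [Nat.add_sub_cancel_left]
    calc (-1:ℤ)^i * ((r+i).choose r) * (d.choose (r+i))
        = (-1:ℤ)^i * ((d.choose (r+i) : ℤ) * ((r+i).choose r)) := by ring
      _ = (-1:ℤ)^i * ((d.choose r : ℤ) * ((d-r).choose i)) := by rw [h2']
      _ = (d.choose r : ℤ) * ((-1:ℤ)^i * ((d-r).choose i)) := by ring
  rw [Finset.sum_congr rfl hterm, ← Finset.mul_sum, Int.alternating_sum_range_choose]
  by_cases h : d = r
  · subst h; simp
  · rw [if_neg (by omega), if_neg h, mul_zero]

lemma lemB (d m : ℕ) (hm1 : 1 ≤ m) (hmd : m ≤ d) :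
    ∑ k ∈ Finset.Icc m d, (-1:ℤ)^(k-m) * ((k-1).choose (m-1)) * (d.choose k) = 1 := by
  induction d, hmd using Nat.le_induction with
  | base =>
      rw [Finset.Icc_self, Finset.sum_singleton]
      simp
  | succ d hmd ih =>
      have hsplit : ∀ k ∈ Finset.Icc m (d+1),
          (-1:ℤ)^(k-m) * ((k-1).choose (m-1)) * ((d+1).choose k)
            = (-1:ℤ)^(k-m) * ((k-1).choose (m-1)) * (d.choose k)
              + (-1:ℤ)^(k-m) * ((k-1).choose (m-1)) * (d.choose (k-1)) := by
        intro k hk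
        simp only [Finset.mem_Icc] at hk
        obtain ⟨k', rfl⟩ : ∃ k', k = k' + 1 := ⟨k - 1, by omega⟩
        simp only [Nat.add_sub_cancel]
        rw [Nat.choose_succ_succ']
        push_cast
        ring
      rw [Finset.sum_congr rfl hsplit, Finset.sum_add_distrib]
      have hfirst : ∑ k ∈ Finset.Icc m (d+1),
          (-1:ℤ)^(k-m) * ((k-1).choose (m-1)) * (d.choose k) = 1 := by
        rw [Finset.sum_Icc_succ_top (by omega : m ≤ d + 1)]
        rw [Nat.choose_succ_self, ih]
        simp
      have hsecond : ∑ k ∈ Finset.Icc m (d+1),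
          (-1:ℤ)^(k-m) * ((k-1).choose (m-1)) * (d.choose (k-1)) = 0 := by
        have hmap : Finset.Icc m (d+1)
            = (Finset.Icc (m-1) d).map ⟨fun j => j + 1, add_left_injective 1⟩ := by
          ext k
          simp only [Finset.mem_Icc, Finset.mem_map, Function.Embedding.coeFn_mk]
          constructor
          · intro h; exact ⟨k - 1, by omega, by omega⟩
          · rintro ⟨j, hj, rfl⟩; omega
        rw [hmap, Finset.sum_map]
        simp only [Function.Embedding.coeFn_mk, Nat.add_sub_cancel]
        have hA := lemA (m-1) d (by omega)
        rw [if_neg (by omega)] at hA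
        rw [← hA]
        apply Finset.sum_congr rfl
        intro j hj
        simp only [Finset.mem_Icc] at hj
        have : j + 1 - m = j - (m-1) := by omega
        rw [this]
      rw [hfirst, hsecond]
      ring

lemma lemC (m n d : ℕ) (hm1 : 1 ≤ m) (hdn : d ≤ n) :
    ∑ k ∈ Finset.Icc m n, (-1:ℤ)^(k-m) * ((k-1).choose (k-m)) * (d.choose k)
      = if m ≤ d then 1 else 0 := by
  have hsym : ∀ k, m ≤ k → ((k-1).choose (k-m)) = ((k-1).choose (m-1)) := by
    intro k hk
    have h1 : k - m = (k-1) - (m-1) := by omega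
    rw [h1, Nat.choose_symm (by omega)]
  by_cases hd : m ≤ d
  · rw [if_pos hd]
    have hsub : ∑ k ∈ Finset.Icc m d, (-1:ℤ)^(k-m) * ((k-1).choose (k-m)) * (d.choose k)
        = ∑ k ∈ Finset.Icc m n, (-1:ℤ)^(k-m) * ((k-1).choose (k-m)) * (d.choose k) := by
      apply Finset.sum_subset (Finset.Icc_subset_Icc_right hdn)
      intro k hk hk'
      simp only [Finset.mem_Icc] at hk hk'
      have hlt : d < k := by omega
      rw [Nat.choose_eq_zero_of_lt hlt]
      push_cast; ring
    calc ∑ k ∈ Finset.Icc m n, (-1:ℤ)^(k-m) * ((k-1).choose (k-m)) * (d.choose k)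
        = ∑ k ∈ Finset.Icc m d, (-1:ℤ)^(k-m) * ((k-1).choose (k-m)) * (d.choose k) := hsub.symm
      _ = ∑ k ∈ Finset.Icc m d, (-1:ℤ)^(k-m) * ((k-1).choose (m-1)) * (d.choose k) := by
          apply Finset.sum_congr rfl
          intro k hk
          simp only [Finset.mem_Icc] at hk
          rw [hsym k hk.1]
      _ = 1 := lemB d m hm1 hd
  · rw [if_neg hd]
    apply Finset.sum_eq_zero
    intro k hk
    simp only [Finset.mem_Icc] at hk
    rw [Nat.choose_eq_zero_of_lt (show d < k by omega)]
    push_cast; ring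

theorem stmt_16 {α : Type*} {n : ℕ} (A : Fin n → Set α) (hA : ∀ i, (A i).Finite)
    (m : ℕ) (hm1 : 1 ≤ m) (hm2 : m ≤ n) :
    ({x : α | m ≤ {j : Fin n | x ∈ A j}.ncard}.ncard : ℤ)
      = ∑ k ∈ Finset.Icc m n,
          (-1 : ℤ) ^ (k - m) * ((k - 1).choose (k - m)) * icard A k := by
  classical
  have hU : (⋃ i, A i).Finite := Set.finite_iUnion hA
  set u : Finset α := hU.toFinset with hu
  have hmemu : ∀ x, x ∈ u ↔ ∃ j, x ∈ A j := by
    intro x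
    rw [hu, Set.Finite.mem_toFinset, Set.mem_iUnion]
  set d : α → ℕ := fun x => (Finset.univ.filter fun j => x ∈ A j).card with hd
  have hdx : ∀ x : α, {j : Fin n | x ∈ A j}.ncard = d x := by
    intro x
    have h1 : {j : Fin n | x ∈ A j} = ↑(Finset.univ.filter fun j => x ∈ A j) := by
      ext j; simp
    rw [h1, Set.ncard_coe_finset, hd]
  have hdn : ∀ x, d x ≤ n := by
    intro x
    rw [hd]
    simpa using (Finset.card_filter_le Finset.univ fun j => x ∈ A j)
  -- LHS
  have hL : {x : α | m ≤ {j : Fin n | x ∈ A j}.ncard}.ncard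
      = (u.filter fun x => m ≤ d x).card := by
    have h1 : {x : α | m ≤ {j : Fin n | x ∈ A j}.ncard}
        = ↑(u.filter fun x => m ≤ d x) := by
      ext x
      simp only [Set.mem_setOf_eq, Finset.coe_filter, hdx]
      constructor
      · intro hx
        refine ⟨(hmemu x).2 ?_, hx⟩
        have hne : (Finset.univ.filter fun j => x ∈ A j).Nonempty := by
          rw [← Finset.card_pos]
          have : 1 ≤ d x := le_trans hm1 hx
          rw [hd] at this
          exact this
        obtain ⟨j, hj⟩ := hne
        simp only [Finset.mem_filter] at hj
        exact ⟨j, hj.2⟩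
      · exact fun h => h.2
    rw [h1, Set.ncard_coe_finset]
  -- icard as a sum of binomial coefficients
  have hI : ∀ k, 1 ≤ k → icard A k = ∑ x ∈ u, (d x).choose k := by
    intro k hk
    unfold icard
    have hJ : ∀ J ∈ Finset.powersetCard k (Finset.univ : Finset (Fin n)),
        (⋂ j ∈ J, A j).ncard = (u.filter fun x => ∀ j ∈ J, x ∈ A j).card := by
      intro J hJmem
      have hJne : J.Nonempty := by
        rw [← Finset.card_pos]
        rw [Finset.mem_powersetCard] at hJmem
        omega
      obtain ⟨j0, hj0⟩ := hJne
      have h1 : (⋂ j ∈ J, A j) = ↑(u.filter fun x => ∀ j ∈ J, x ∈ A j) := by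
        ext x
        simp only [Set.mem_iInter, Finset.coe_filter, Set.mem_setOf_eq]
        constructor
        · intro hx
          exact ⟨(hmemu x).2 ⟨j0, hx j0 hj0⟩, hx⟩
        · exact fun h => h.2
      rw [h1, Set.ncard_coe_finset]
    rw [Finset.sum_congr rfl hJ]
    have h2 : ∀ J ∈ Finset.powersetCard k (Finset.univ : Finset (Fin n)),
        (u.filter fun x => ∀ j ∈ J, x ∈ A j).card
          = ∑ x ∈ u, if (∀ j ∈ J, x ∈ A j) then 1 else 0 := by
      intro J _
      rw [Finset.card_filter]
    rw [Finset.sum_congr rfl h2, Finset.sum_comm]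
    apply Finset.sum_congr rfl
    intro x _
    rw [← Finset.card_filter]
    have heq : (Finset.powersetCard k (Finset.univ : Finset (Fin n))).filter
        (fun J => ∀ j ∈ J, x ∈ A j)
        = Finset.powersetCard k (Finset.univ.filter fun j => x ∈ A j) := by
      ext J
      simp only [Finset.mem_filter, Finset.mem_powersetCard, Finset.subset_iff,
        Finset.mem_univ, true_and, Finset.mem_filter]
      tauto
    rw [heq, Finset.card_powersetCard, hd]
  -- main computation
  rw [hL]
  calc ((u.filter fun x => m ≤ d x).card : ℤ)
      = ∑ x ∈ u, if m ≤ d x then (1:ℤ) else 0 := by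
        rw [Finset.sum_boole]
    _ = ∑ x ∈ u, ∑ k ∈ Finset.Icc m n,
          (-1:ℤ)^(k-m) * ((k-1).choose (k-m)) * ((d x).choose k) := by
        apply Finset.sum_congr rfl
        intro x _
        rw [lemC m n (d x) hm1 (hdn x)]
    _ = ∑ k ∈ Finset.Icc m n, ∑ x ∈ u,
          (-1:ℤ)^(k-m) * ((k-1).choose (k-m)) * ((d x).choose k) := Finset.sum_comm
    _ = ∑ k ∈ Finset.Icc m n,
          (-1:ℤ)^(k-m) * ((k-1).choose (k-m)) * (icard A k) := by
        apply Finset.sum_congr rfl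
        intro k hk
        simp only [Finset.mem_Icc] at hk
        rw [hI k (le_trans hm1 hk.1)]
        push_cast
        rw [Finset.mul_sum]
end

section
/- For any finite sets A_1,...,A_n, the number of elements x of A_1 ∪...∪ A_n that belong to an even number of the sets A_j equals Σ_{k=1}^{n} (-1)^k (2^{k-1} − 1) i_{n,k}(A). -/
open Finset

lemma aux_sum_pow_choose (x : ℤ) {d n : ℕ} (hd : d ≤ n) :
    ∑ k ∈ Finset.Icc 1 n, x ^ k * (d.choose k : ℤ) = (1 + x) ^ d - 1 := by
  have h1 : ∑ k ∈ Finset.range (n + 1), x ^ k * (d.choose k : ℤ) = (1 + x) ^ d := by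
    rw [← Finset.sum_subset (Finset.range_subset_range.2 (by omega) :
        Finset.range (d + 1) ⊆ Finset.range (n + 1))]
    · rw [add_comm 1 x, add_pow]
      simp
    · intro k _ hk
      have : d < k := by simpa using hk
      simp [Nat.choose_eq_zero_of_lt this]
  have h2 : Finset.range (n + 1) = insert 0 (Finset.Icc 1 n) := by
    ext k; simp [Finset.mem_Icc, Nat.lt_succ_iff]; omega
  rw [h2, Finset.sum_insert (by simp)] at h1
  simp at h1
  linarith

lemma aux_perx {d n : ℕ} (hd1 : 1 ≤ d) (hdn : d ≤ n) :
    ∑ k ∈ Finset.Icc 1 n, (-1 : ℤ) ^ k * (2 ^ (k - 1) - 1) * (d.choose k : ℤ)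
      = if Even d then 1 else 0 := by
  have key : (2 : ℤ) * ∑ k ∈ Finset.Icc 1 n,
      (-1 : ℤ) ^ k * (2 ^ (k - 1) - 1) * (d.choose k : ℤ)
      = (∑ k ∈ Finset.Icc 1 n, (-2 : ℤ) ^ k * (d.choose k : ℤ))
        - 2 * ∑ k ∈ Finset.Icc 1 n, (-1 : ℤ) ^ k * (d.choose k : ℤ) := by
    rw [Finset.mul_sum, Finset.mul_sum, ← Finset.sum_sub_distrib]
    apply Finset.sum_congr rfl
    intro k hk
    have hk1 : 1 ≤ k := (Finset.mem_Icc.1 hk).1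
    have h2k : (2 : ℤ) ^ k = 2 * 2 ^ (k - 1) := by
      rw [← pow_succ']; congr 1; omega
    have hneg : (-2 : ℤ) ^ k = (-1 : ℤ) ^ k * 2 ^ k := by
      rw [← neg_one_mul, mul_pow]
    rw [hneg, h2k]; ring
  rw [aux_sum_pow_choose (-2) hdn, aux_sum_pow_choose (-1) hdn] at key
  have h0 : (1 + (-1) : ℤ) = 0 := by ring
  rw [h0, zero_pow (by omega : d ≠ 0)] at key
  have h1 : (1 + (-2) : ℤ) = -1 := by ring
  rw [h1] at key
  rcases Nat.even_or_odd d with he | ho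
  · rw [he.neg_one_pow] at key
    simp only [if_pos he]
    linarith
  · rw [ho.neg_one_pow] at key
    simp only [if_neg (Nat.not_even_iff_odd.2 ho)]
    linarith

theorem stmt_17 {α : Type*} {n : ℕ} (A : Fin n → Set α) (hA : ∀ i, (A i).Finite) :
    (({x ∈ ⋃ i, A i | Even {j : Fin n | x ∈ A j}.ncard}).ncard : ℤ)
      = ∑ k ∈ Finset.Icc 1 n,
          (-1 : ℤ) ^ k * (2 ^ (k - 1) - 1) * icard A k := by
  classical
  have hU : (⋃ i, A i).Finite := Set.finite_iUnion hA
  set T := hU.toFinset with hT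
  set D : α → Finset (Fin n) := fun x => Finset.univ.filter (fun j => x ∈ A j) with hD
  have hmemD : ∀ x j, j ∈ D x ↔ x ∈ A j := by intro x j; simp [hD]
  -- degree bounds
  have hDle : ∀ x, (D x).card ≤ n := fun x => by
    simpa using Finset.card_le_card (Finset.subset_univ (D x))
  have hDpos : ∀ x ∈ T, 1 ≤ (D x).card := by
    intro x hx
    rw [hT, Set.Finite.mem_toFinset, Set.mem_iUnion] at hx
    obtain ⟨i, hi⟩ := hx
    exact Finset.card_pos.2 ⟨i, (hmemD x i).2 hi⟩
  -- LHS
  have hcoeD : ∀ x, {j : Fin n | x ∈ A j}.ncard = (D x).card := by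
    intro x
    rw [← Set.ncard_coe_finset]
    congr 1
    ext j; simp [hD]
  have hLset : {x ∈ ⋃ i, A i | Even {j : Fin n | x ∈ A j}.ncard}
      = ↑(T.filter fun x => Even (D x).card) := by
    ext x
    simp only [Set.mem_setOf_eq, Finset.coe_filter, hT, Set.Finite.mem_toFinset, hcoeD]
  have hL : ({x ∈ ⋃ i, A i | Even {j : Fin n | x ∈ A j}.ncard}).ncard
      = (T.filter fun x => Even (D x).card).card := by
    rw [hLset, Set.ncard_coe_finset]
  -- icard via double counting
  have hIcap : ∀ (J : Finset (Fin n)), J.Nonempty →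
      (⋂ j ∈ J, A j).ncard = (T.filter (fun x => ∀ j ∈ J, x ∈ A j)).card := by
    intro J hJ
    obtain ⟨j0, hj0⟩ := hJ
    have hsub : (⋂ j ∈ J, A j) ⊆ A j0 := Set.biInter_subset_of_mem hj0
    have hfin : (⋂ j ∈ J, A j).Finite := (hA j0).subset hsub
    rw [Set.ncard_eq_toFinset_card _ hfin]
    congr 1
    ext x
    simp only [Set.Finite.mem_toFinset, Set.mem_iInter, Finset.mem_filter, hT,
      Set.Finite.mem_toFinset, Set.mem_iUnion]
    constructor
    · intro h; exact ⟨⟨j0, h j0 hj0⟩, h⟩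
    · intro h; exact h.2
  have hIcard : ∀ k, 1 ≤ k →
      icard A k = ∑ x ∈ T, (D x).card.choose k := by
    intro k hk
    unfold icard
    have hstep : ∀ J ∈ Finset.powersetCard k (Finset.univ : Finset (Fin n)),
        (⋂ j ∈ J, A j).ncard = ∑ x ∈ T, if ∀ j ∈ J, x ∈ A j then 1 else 0 := by
      intro J hJ
      have hJne : J.Nonempty := by
        rw [← Finset.card_pos, (Finset.mem_powersetCard.1 hJ).2]; omega
      rw [hIcap J hJne, Finset.card_filter]
    rw [Finset.sum_congr rfl hstep, Finset.sum_comm]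
    apply Finset.sum_congr rfl
    intro x _
    have hfe : Finset.filter (fun J => ∀ j ∈ J, x ∈ A j)
        (Finset.powersetCard k (Finset.univ : Finset (Fin n)))
        = Finset.powersetCard k (D x) := by
      ext J
      simp only [Finset.mem_filter, Finset.mem_powersetCard, Finset.subset_univ, true_and]
      constructor
      · rintro ⟨hc, hmem⟩
        exact ⟨fun j hj => (hmemD x j).2 (hmem j hj), hc⟩
      · rintro ⟨hsub, hc⟩
        exact ⟨hc, fun j hj => (hmemD x j).1 (hsub hj)⟩
    rw [← Finset.card_filter, hfe, Finset.card_powersetCard]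
  -- put together
  push_cast [hL, Finset.card_filter]
  have hR : ∀ k ∈ Finset.Icc 1 n,
      (-1 : ℤ) ^ k * (2 ^ (k - 1) - 1) * (icard A k : ℤ)
      = ∑ x ∈ T, (-1 : ℤ) ^ k * (2 ^ (k - 1) - 1) * ((D x).card.choose k : ℤ) := by
    intro k hk
    rw [hIcard k (Finset.mem_Icc.1 hk).1]
    push_cast
    rw [Finset.mul_sum]
  rw [Finset.sum_congr rfl hR, Finset.sum_comm]
  apply Finset.sum_congr rfl
  intro x hx
  rw [aux_perx (hDpos x hx) (hDle x)]
end

section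
/- For any finite sets A_1,...,A_n, the number of elements x with |{j : x ∈ A_j}| odd equals Σ_{k=1}^{n} (-1)^{k-1} 2^{k-1} i_{n,k}(A). -/
open Finset

lemma key_sum (n m : ℕ) (hm : m ≤ n) :
    ∑ k ∈ Finset.Icc 1 n, (-1:ℤ)^(k-1) * 2^(k-1) * (m.choose k) =
      if Odd m then 1 else 0 := by
  have hsub : Finset.Icc 1 m ⊆ Finset.Icc 1 n := Finset.Icc_subset_Icc_right hm
  rw [← Finset.sum_subset hsub (by
    intro k hk hk'
    have : m < k := by simp only [Finset.mem_Icc] at *; omega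
    simp [Nat.choose_eq_zero_of_lt this])]
  have hbin : ((-2 : ℤ) + 1)^m = ∑ k ∈ Finset.range (m+1), (-2:ℤ)^k * 1^(m-k) * (m.choose k) :=
    add_pow _ _ _
  have hbin2 : ((-1:ℤ))^m = ∑ k ∈ Finset.range (m+1), (-2:ℤ)^k * (m.choose k) := by
    simpa using hbin
  have hsplit : ∑ k ∈ Finset.range (m+1), (-2:ℤ)^k * (m.choose k)
      = 1 + ∑ k ∈ Finset.Icc 1 m, (-2:ℤ)^k * (m.choose k) := by
    rw [Finset.range_eq_Ico, Finset.sum_eq_sum_Ico_succ_bot (by omega)]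
    simp [Finset.Ico_add_one_right_eq_Icc]
  have h2 : (2:ℤ) * ∑ k ∈ Finset.Icc 1 m, (-1:ℤ)^(k-1) * 2^(k-1) * (m.choose k)
      = 1 - (-1:ℤ)^m := by
    rw [Finset.mul_sum]
    have : ∀ k ∈ Finset.Icc 1 m, 2 * ((-1:ℤ)^(k-1) * 2^(k-1) * (m.choose k))
        = -((-2:ℤ)^k * (m.choose k)) := by
      intro k hk
      have hk1 : 1 ≤ k := (Finset.mem_Icc.mp hk).1
      obtain ⟨j, rfl⟩ := Nat.exists_eq_add_of_le hk1
      have : (1 + j) - 1 = j := by omega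
      rw [this, pow_add, show ((-2:ℤ))^j = (-1)^j * 2^j from neg_pow 2 j]
      ring
    rw [Finset.sum_congr rfl this, Finset.sum_neg_distrib]
    have := hbin2.trans hsplit
    linarith
  rcases Nat.even_or_odd m with he | ho
  · rw [if_neg (by simp [Nat.not_odd_iff_even, he])]
    rw [he.neg_one_pow] at h2
    linarith
  · rw [if_pos ho, ho.neg_one_pow] at *
    linarith

theorem stmt_18 {α : Type*} {n : ℕ} (A : Fin n → Set α) (hA : ∀ i, (A i).Finite) :
    ({x : α | Odd {j : Fin n | x ∈ A j}.ncard}.ncard : ℤ)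
      = ∑ k ∈ Finset.Icc 1 n,
          (-1 : ℤ) ^ (k - 1) * 2 ^ (k - 1) * icard A k := by
  classical
  have hU : (⋃ i, A i).Finite := Set.finite_iUnion hA
  set F : Finset α := hU.toFinset with hF
  set Sx : α → Finset (Fin n) := fun x => Finset.univ.filter (fun j => x ∈ A j) with hSx
  have hmemU : ∀ x : α, ∀ j, x ∈ A j → x ∈ F := by
    intro x j hx
    simp only [hF, Set.Finite.mem_toFinset, Set.mem_iUnion]
    exact ⟨j, hx⟩
  have hSxcard : ∀ x, {j : Fin n | x ∈ A j}.ncard = (Sx x).card := by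
    intro x
    rw [show {j : Fin n | x ∈ A j} = ↑(Sx x) by ext j; simp [hSx]]
    exact Set.ncard_coe_finset _
  have hSxmem : ∀ x j, j ∈ Sx x ↔ x ∈ A j := by intro x j; simp [hSx]
  -- LHS
  have hLHS : {x : α | Odd {j : Fin n | x ∈ A j}.ncard}.ncard
      = (F.filter (fun x => Odd (Sx x).card)).card := by
    rw [show {x : α | Odd {j : Fin n | x ∈ A j}.ncard}
        = ↑(F.filter (fun x => Odd (Sx x).card)) from ?_]
    · exact Set.ncard_coe_finset _
    ext x
    simp only [Set.mem_setOf_eq, Finset.coe_filter, hSxcard]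
    constructor
    · intro h
      refine ⟨?_, h⟩
      have hne : (Sx x).card ≠ 0 := by
        intro h0; rw [h0] at h; exact (Nat.not_odd_iff_even.mpr Even.zero) h
      obtain ⟨j, hj⟩ := Finset.card_ne_zero.mp hne
      exact hmemU x j ((hSxmem x j).mp hj)
    · exact fun h => h.2
  -- count lemma
  have hcount : ∀ (x : α) (k : ℕ),
      ∑ J ∈ Finset.powersetCard k (Finset.univ : Finset (Fin n)),
        (if J ⊆ Sx x then (1:ℤ) else 0) = ((Sx x).card.choose k : ℤ) := by
    intro x k
    rw [← Finset.sum_filter]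
    have hfe : (Finset.powersetCard k (Finset.univ : Finset (Fin n))).filter
        (fun J => J ⊆ Sx x) = Finset.powersetCard k (Sx x) := by
      ext J
      simp only [Finset.mem_filter, Finset.mem_powersetCard]
      constructor
      · rintro ⟨⟨-, h2⟩, h3⟩; exact ⟨h3, h2⟩
      · rintro ⟨h1, h2⟩; exact ⟨⟨Finset.subset_univ J, h2⟩, h1⟩
    rw [hfe]
    simp [Finset.card_powersetCard]
  -- icard as double sum
  have hicard : ∀ k, 1 ≤ k → (icard A k : ℤ) =
      ∑ x ∈ F, ∑ J ∈ Finset.powersetCard k (Finset.univ : Finset (Fin n)),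
        (if J ⊆ Sx x then (1:ℤ) else 0) := by
    intro k hk1
    rw [Finset.sum_comm, icard]
    push_cast
    apply Finset.sum_congr rfl
    intro J hJ
    have hJcard : J.card = k := (Finset.mem_powersetCard.mp hJ).2
    have hJne : J.Nonempty := Finset.card_pos.mp (by omega)
    have hset : (⋂ j ∈ J, A j) = ↑(F.filter (fun x => J ⊆ Sx x)) := by
      ext x
      simp only [Set.mem_iInter, Finset.coe_filter, Set.mem_setOf_eq]
      constructor
      · intro h
        obtain ⟨j0, hj0⟩ := hJne
        refine ⟨hmemU x j0 (h j0 hj0), fun j hj => (hSxmem x j).mpr (h j hj)⟩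
      · rintro ⟨-, h⟩ j hj
        exact (hSxmem x j).mp (h hj)
    rw [hset, Set.ncard_coe_finset, Finset.card_filter]
    push_cast
    rfl
  -- main computation
  calc ({x : α | Odd {j : Fin n | x ∈ A j}.ncard}.ncard : ℤ)
      = ∑ x ∈ F, (if Odd (Sx x).card then (1:ℤ) else 0) := by
        rw [hLHS, ← Finset.sum_filter]
        simp
    _ = ∑ x ∈ F, ∑ k ∈ Finset.Icc 1 n,
          (-1 : ℤ) ^ (k - 1) * 2 ^ (k - 1) * ((Sx x).card.choose k : ℤ) := by
        apply Finset.sum_congr rfl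
        intro x _
        rw [key_sum n (Sx x).card (by simpa using Finset.card_le_univ (Sx x))]
    _ = ∑ k ∈ Finset.Icc 1 n, (-1 : ℤ) ^ (k - 1) * 2 ^ (k - 1) * icard A k := by
        rw [Finset.sum_comm]
        apply Finset.sum_congr rfl
        intro k hk
        rw [hicard k (Finset.mem_Icc.mp hk).1, Finset.mul_sum]
        apply Finset.sum_congr rfl
        intro x _
        rw [hcount x k]
end
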